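/- The gadget graph constructed from any E3C instance is K_4-free: it contains no set of four pairwise adjacent vertices. -/

import Mathlib

open scoped Classical

/-- Vertex set of the gadget graph: element vertices `u` (coded `.inl (.inl u)`) and
`u'` (coded `.inl (.inr u)`) for each `u : U`, and triangle vertices
`a_i, b_i, c_i` (coded `.inr (i, 0/1/2)`) for each `i : Fin m`. -/
abbrev GVert (U : Type*) (m : ℕ) := (U ⊕ U) ⊕ (Fin m × Fin 3)

section Gadget

variable {U : Type*} {m : ℕ}

/-- The element vertex `u`. -/
def el (u : U) : GVert U m := Sum.inl (Sum.inl u)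

/-- The element vertex `u'`. -/
def el' (u : U) : GVert U m := Sum.inl (Sum.inr u)

/-- The triangle vertex `a_i`. -/
def va (i : Fin m) : GVert U m := Sum.inr (i, 0)

/-- The triangle vertex `b_i`. -/
def vb (i : Fin m) : GVert U m := Sum.inr (i, 1)

/-- The triangle vertex `c_i`. -/
def vc (i : Fin m) : GVert U m := Sum.inr (i, 2)

/-- The twelve gadget edges `E_i` for the set `S i = (u, v, w)`, namely
`a_ib_i, a_ic_i, b_ic_i, a_iu, b_iu, a_iu', a_iv, c_iv, c_iv', b_iw, c_iw, b_iw'`. -/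
def Ei (S : Fin m → U × U × U) (i : Fin m) : Set (Sym2 (GVert U m)) :=
  {s(va i, vb i), s(va i, vc i), s(vb i, vc i),
   s(va i, el (S i).1), s(vb i, el (S i).1), s(va i, el' (S i).1),
   s(va i, el (S i).2.1), s(vc i, el (S i).2.1), s(vc i, el' (S i).2.1),
   s(vb i, el (S i).2.2), s(vc i, el (S i).2.2), s(vb i, el' (S i).2.2)}

/-- All the edges of the gadget graph: an element-edge `uu'` for every `u : U`,
together with the twelve gadget edges of `E_i` for every `i : Fin m`. -/
def gadgetEdges (S : Fin m → U × U × U) : Set (Sym2 (GVert U m)) :=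
  {e | ∃ u : U, e = s(el u, el' u)} ∪ {e | ∃ i : Fin m, e ∈ Ei S i}

/-- The gadget graph of the E3C instance `S`. -/
def gadgetGraph (S : Fin m → U × U × U) : SimpleGraph (GVert U m) :=
  SimpleGraph.fromEdgeSet (gadgetEdges S)

/-- `S` lists genuine 3-element subsets: the three listed elements of each `S i`
are pairwise distinct. -/
def E3CInstance (S : Fin m → U × U × U) : Prop :=
  ∀ i : Fin m, (S i).1 ≠ (S i).2.1 ∧ (S i).1 ≠ (S i).2.2 ∧ (S i).2.1 ≠ (S i).2.2

/-- `T` is a solution of the E3C instance `S`: a choice of `q` of the sets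
whose union is all of `U`. -/
def E3CSolution (q : ℕ) (S : Fin m → U × U × U) (T : Finset (Fin m)) : Prop :=
  T.card = q ∧ ∀ x : U, ∃ i ∈ T, x = (S i).1 ∨ x = (S i).2.1 ∨ x = (S i).2.2

end Gadget

section Aux
variable {U : Type*} {m : ℕ} {S : Fin m → U × U × U}

lemma adj_inr_inr {i j : Fin m} {k l : Fin 3}
    (h : (gadgetGraph S).Adj (Sum.inr (i,k)) (Sum.inr (j,l))) : i = j ∧ k ≠ l := by
  simp only [gadgetGraph, SimpleGraph.fromEdgeSet_adj, gadgetEdges, Ei, el, el', va, vb, vc,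
    Set.mem_union, Set.mem_setOf_eq, Set.mem_insert_iff, Set.mem_singleton_iff,
    Sym2.eq, Sym2.rel_iff', Prod.mk.injEq, Prod.swap_prod_mk, Sum.inr.injEq, Sum.inl.injEq,
    reduceCtorEq, ne_eq, false_and, and_false, or_false, false_or, exists_false,
    exists_and_left] at h
  obtain ⟨h, hne⟩ := h
  
  aesop

lemma adj_inl_inl {p q : U ⊕ U}
    (h : (gadgetGraph S).Adj (Sum.inl p) (Sum.inl q)) :
    ∃ u, (p = .inl u ∧ q = .inr u) ∨ (p = .inr u ∧ q = .inl u) := by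
  simp only [gadgetGraph, SimpleGraph.fromEdgeSet_adj, gadgetEdges, Ei, el, el', va, vb, vc,
    Set.mem_union, Set.mem_setOf_eq, Set.mem_insert_iff, Set.mem_singleton_iff,
    Sym2.eq, Sym2.rel_iff', Prod.mk.injEq, Prod.swap_prod_mk, Sum.inr.injEq, Sum.inl.injEq,
    reduceCtorEq, ne_eq, false_and, and_false, or_false, false_or, exists_false,
    exists_and_left] at h
  obtain ⟨h, hne⟩ := h
  aesop

lemma adj_el'_inr {x : U} {i : Fin m} {k : Fin 3}
    (h : (gadgetGraph S).Adj (Sum.inl (.inr x)) (Sum.inr (i,k))) :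
    (k = 0 ∧ x = (S i).1) ∨ (k = 2 ∧ x = (S i).2.1) ∨ (k = 1 ∧ x = (S i).2.2) := by
  simp only [gadgetGraph, SimpleGraph.fromEdgeSet_adj, gadgetEdges, Ei, el, el', va, vb, vc,
    Set.mem_union, Set.mem_setOf_eq, Set.mem_insert_iff, Set.mem_singleton_iff,
    Sym2.eq, Sym2.rel_iff', Prod.mk.injEq, Prod.swap_prod_mk, Sum.inr.injEq, Sum.inl.injEq,
    reduceCtorEq, ne_eq, false_and, and_false, or_false, false_or, exists_false,
    exists_and_left] at h
  obtain ⟨h, hne⟩ := h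
  aesop

lemma adj_el_inr {x : U} {i : Fin m} {k : Fin 3}
    (h : (gadgetGraph S).Adj (Sum.inl (.inl x)) (Sum.inr (i,k))) :
    (k = 0 ∧ (x = (S i).1 ∨ x = (S i).2.1)) ∨ (k = 1 ∧ (x = (S i).1 ∨ x = (S i).2.2)) ∨
    (k = 2 ∧ (x = (S i).2.1 ∨ x = (S i).2.2)) := by
  simp only [gadgetGraph, SimpleGraph.fromEdgeSet_adj, gadgetEdges, Ei, el, el', va, vb, vc,
    Set.mem_union, Set.mem_setOf_eq, Set.mem_insert_iff, Set.mem_singleton_iff,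
    Sym2.eq, Sym2.rel_iff', Prod.mk.injEq, Prod.swap_prod_mk, Sum.inr.injEq, Sum.inl.injEq,
    reduceCtorEq, ne_eq, false_and, and_false, or_false, false_or, exists_false,
    exists_and_left] at h
  obtain ⟨h, hne⟩ := h
  aesop
lemma no_inl_triple {p q r : U ⊕ U}
    (hpq : (gadgetGraph S).Adj (Sum.inl p) (Sum.inl q))
    (hpr : (gadgetGraph S).Adj (Sum.inl p) (Sum.inl r))
    (hqr : (gadgetGraph S).Adj (Sum.inl q) (Sum.inl r)) : False := by
  have hne : q ≠ r := fun h => hqr.ne (by rw [h])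
  obtain ⟨u, hu⟩ := adj_inl_inl hpq
  obtain ⟨v, hv⟩ := adj_inl_inl hpr
  aesop

lemma no_p_all3 (hS : E3CInstance S) {p : U ⊕ U} {i : Fin m}
    (h0 : (gadgetGraph S).Adj (Sum.inl p) (Sum.inr (i,0)))
    (h1 : (gadgetGraph S).Adj (Sum.inl p) (Sum.inr (i,1)))
    (h2 : (gadgetGraph S).Adj (Sum.inl p) (Sum.inr (i,2))) : False := by
  obtain ⟨hs1, hs2, hs3⟩ := hS i
  cases p with
  | inl x =>
    have d0 := adj_el_inr h0
    have d1 := adj_el_inr h1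
    have d2 := adj_el_inr h2
    simp only [Fin.isValue, show (0:Fin 3) ≠ 1 by decide, show (0:Fin 3) ≠ 2 by decide,
      show (1:Fin 3) ≠ 0 by decide, show (1:Fin 3) ≠ 2 by decide,
      show (2:Fin 3) ≠ 0 by decide, show (2:Fin 3) ≠ 1 by decide] at d0 d1 d2
    aesop
  | inr x =>
    have d0 := adj_el'_inr h0
    have d1 := adj_el'_inr h1
    aesop

lemma no_pair_pair (hS : E3CInstance S) {x : U} {i : Fin m} {k l : Fin 3} (hkl : k ≠ l)
    (h1 : (gadgetGraph S).Adj (Sum.inl (.inr x)) (Sum.inr (i,k)))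
    (h2 : (gadgetGraph S).Adj (Sum.inl (.inr x)) (Sum.inr (i,l))) : False := by
  obtain ⟨hs1, hs2, hs3⟩ := hS i
  have d1 := adj_el'_inr h1
  have d2 := adj_el'_inr h2
  aesop

lemma pair_pair (hS : E3CInstance S) {p q : U ⊕ U} {i j : Fin m} {k l : Fin 3}
    (hpq : (gadgetGraph S).Adj (Sum.inl p) (Sum.inl q))
    (hij : (gadgetGraph S).Adj (Sum.inr (i,k)) (Sum.inr (j,l)))
    (hpi : (gadgetGraph S).Adj (Sum.inl p) (Sum.inr (i,k)))
    (hpj : (gadgetGraph S).Adj (Sum.inl p) (Sum.inr (j,l)))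
    (hqi : (gadgetGraph S).Adj (Sum.inl q) (Sum.inr (i,k)))
    (hqj : (gadgetGraph S).Adj (Sum.inl q) (Sum.inr (j,l))) : False := by
  obtain ⟨rfl, hkl⟩ := adj_inr_inr hij
  obtain ⟨u, hu | hu⟩ := adj_inl_inl hpq
  · obtain ⟨rfl, rfl⟩ := hu
    exact no_pair_pair hS hkl hqi hqj
  · obtain ⟨rfl, rfl⟩ := hu
    exact no_pair_pair hS hkl hpi hpj

lemma tri_one (hS : E3CInstance S) {p : U ⊕ U} {i1 i2 i3 : Fin m} {k1 k2 k3 : Fin 3}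
    (h12 : (gadgetGraph S).Adj (Sum.inr (i1,k1)) (Sum.inr (i2,k2)))
    (h13 : (gadgetGraph S).Adj (Sum.inr (i1,k1)) (Sum.inr (i3,k3)))
    (h23 : (gadgetGraph S).Adj (Sum.inr (i2,k2)) (Sum.inr (i3,k3)))
    (hp1 : (gadgetGraph S).Adj (Sum.inl p) (Sum.inr (i1,k1)))
    (hp2 : (gadgetGraph S).Adj (Sum.inl p) (Sum.inr (i2,k2)))
    (hp3 : (gadgetGraph S).Adj (Sum.inl p) (Sum.inr (i3,k3))) : False := by
  obtain ⟨rfl, e12⟩ := adj_inr_inr h12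
  obtain ⟨rfl, e13⟩ := adj_inr_inr h13
  obtain ⟨-, e23⟩ := adj_inr_inr h23
  have e : ∀ t : Fin 3, t = k1 ∨ t = k2 ∨ t = k3 := by
    intro t
    have b1 := k1.isLt; have b2 := k2.isLt; have b3 := k3.isLt; have bt := t.isLt
    have n12 : k1.val ≠ k2.val := fun h => e12 (Fin.ext h)
    have n13 : k1.val ≠ k3.val := fun h => e13 (Fin.ext h)
    have n23 : k2.val ≠ k3.val := fun h => e23 (Fin.ext h)
    have : t.val = k1.val ∨ t.val = k2.val ∨ t.val = k3.val := by omega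
    rcases this with h | h | h
    · exact Or.inl (Fin.ext h)
    · exact Or.inr (Or.inl (Fin.ext h))
    · exact Or.inr (Or.inr (Fin.ext h))
  have g : ∀ t : Fin 3, (gadgetGraph S).Adj (Sum.inl p) (Sum.inr (i1, t)) := by
    intro t
    rcases e t with h | h | h <;> rw [h] <;> assumption
  exact no_p_all3 hS (g 0) (g 1) (g 2)

lemma four_tri {i1 i2 i3 i4 : Fin m} {k1 k2 k3 k4 : Fin 3}
    (h12 : (gadgetGraph S).Adj (Sum.inr (i1,k1)) (Sum.inr (i2,k2)))
    (h13 : (gadgetGraph S).Adj (Sum.inr (i1,k1)) (Sum.inr (i3,k3)))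
    (h14 : (gadgetGraph S).Adj (Sum.inr (i1,k1)) (Sum.inr (i4,k4)))
    (h23 : (gadgetGraph S).Adj (Sum.inr (i2,k2)) (Sum.inr (i3,k3)))
    (h24 : (gadgetGraph S).Adj (Sum.inr (i2,k2)) (Sum.inr (i4,k4)))
    (h34 : (gadgetGraph S).Adj (Sum.inr (i3,k3)) (Sum.inr (i4,k4))) : False := by
  obtain ⟨-, h12⟩ := adj_inr_inr h12
  obtain ⟨-, h13⟩ := adj_inr_inr h13
  obtain ⟨-, h14⟩ := adj_inr_inr h14
  obtain ⟨-, h23⟩ := adj_inr_inr h23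
  obtain ⟨-, h24⟩ := adj_inr_inr h24
  obtain ⟨-, h34⟩ := adj_inr_inr h34
  have b1 := k1.isLt; have b2 := k2.isLt; have b3 := k3.isLt; have b4 := k4.isLt
  have n12 : k1.val ≠ k2.val := fun h => h12 (Fin.ext h)
  have n13 : k1.val ≠ k3.val := fun h => h13 (Fin.ext h)
  have n14 : k1.val ≠ k4.val := fun h => h14 (Fin.ext h)
  have n23 : k2.val ≠ k3.val := fun h => h23 (Fin.ext h)
  have n24 : k2.val ≠ k4.val := fun h => h24 (Fin.ext h)
  have n34 : k3.val ≠ k4.val := fun h => h34 (Fin.ext h)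
  omega

lemma key (hS : E3CInstance S) (w x y z : GVert U m)
    (h1 : (gadgetGraph S).Adj w x) (h2 : (gadgetGraph S).Adj w y)
    (h3 : (gadgetGraph S).Adj w z) (h4 : (gadgetGraph S).Adj x y)
    (h5 : (gadgetGraph S).Adj x z) (h6 : (gadgetGraph S).Adj y z) : False := by
  rcases w with p | ⟨i1, k1⟩ <;> rcases x with q | ⟨i2, k2⟩ <;>
    rcases y with r | ⟨i3, k3⟩ <;> rcases z with s | ⟨i4, k4⟩
  · exact no_inl_triple h1 h2 h4
  · exact no_inl_triple h1 h2 h4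
  · exact no_inl_triple h1 h3 h5
  · exact pair_pair hS h1 h6 h2 h3 h4 h5
  · exact no_inl_triple h2 h3 h6
  · exact pair_pair hS h2 h5 h1 h3 h4.symm h6
  · exact pair_pair hS h3 h4 h1 h2 h5.symm h6.symm
  · exact tri_one hS h4 h5 h6 h1 h2 h3
  · exact no_inl_triple h4 h5 h6
  · exact pair_pair hS h4 h3 h1.symm h5 h2.symm h6
  · exact pair_pair hS h5 h2 h1.symm h4 h3.symm h6.symm
  · exact tri_one hS h2 h3 h6 h1.symm h4 h5
  · exact pair_pair hS h6 h1 h2.symm h4.symm h3.symm h5.symm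
  · exact tri_one hS h1 h3 h5 h2.symm h4.symm h6
  · exact tri_one hS h1 h2 h4 h3.symm h5.symm h6.symm
  · exact four_tri h1 h2 h3 h4 h5 h6

end Aux

/-- The gadget graph constructed from any E3C instance is `K_4`-free: it contains no set
of four pairwise adjacent vertices. -/
theorem stmt_1 {U : Type*} {m : ℕ} (S : Fin m → U × U × U) (hS : E3CInstance S) :
    (gadgetGraph S).CliqueFree 4 := by
  rw [SimpleGraph.cliqueFree_iff]
  constructor
  intro f
  exact key hS (f 0) (f 1) (f 2) (f 3)
    (f.toHom.map_adj (by simp)) (f.toHom.map_adj (by simp))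
    (f.toHom.map_adj (by simp)) (f.toHom.map_adj (by simp))
    (f.toHom.map_adj (by simp)) (f.toHom.map_adj (by simp))
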